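/- Let $A$ be a unital associative ring and let $m, n \ge 2$ be integers. Then for all $a_1, \dots, a_m, b_1, \dots, b_n \in A$, the commutator $\bigl[[a_1, \dots, a_m], [b_1, \dots, b_n]\bigr]$ belongs to $T^{(m+n)}(A)$. -/

import Mathlib

/-- The ring commutator `[a, b] = a * b - b * a`. -/
def brk {A : Type*} [NonUnitalNonAssocRing A] (a b : A) : A := a * b - b * a

/-- The left-normed commutator `[a 0, a 1, ..., a (k-1)]`. -/
def lnc {A : Type*} [NonUnitalNonAssocRing A] : ∀ {k : ℕ}, (Fin k → A) → A
  | 0, _ => 0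
  | 1, a => a 0
  | k + 2, a => brk (lnc (Fin.init a)) (a (Fin.last (k + 1)))

/-- `T A m` is the two-sided ideal of `A` generated by all left-normed commutators
of length `m` (for `m = 1` this is all of `A`). -/
def T (A : Type*) [NonUnitalNonAssocRing A] (m : ℕ) : TwoSidedIdeal A :=
  TwoSidedIdeal.span {x | ∃ a : Fin m → A, x = lnc a}

/-- The additive span of left-normed commutators of length `k`. -/
def S (A : Type*) [Ring A] (k : ℕ) : AddSubgroup A :=
  AddSubgroup.closure {x | ∃ c : Fin k → A, x = lnc c}

lemma lnc_snoc {A : Type*} [Ring A] {m : ℕ} (a : Fin (m + 1) → A) (x : A) :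
    lnc (Fin.snoc a x) = brk (lnc a) x := by
  show lnc (Fin.snoc a x : Fin (m + 2) → A) = _
  rw [lnc]
  simp [Fin.init_snoc, Fin.snoc_last]

lemma brk_jacobi {A : Type*} [Ring A] (u c d : A) :
    brk u (brk c d) = brk (brk u c) d - brk (brk u d) c := by
  simp only [brk]
  noncomm_ring

lemma brk_mem_S {A : Type*} [Ring A] {k : ℕ} {z : A} (hz : z ∈ S A (k + 1)) (d : A) :
    brk z d ∈ S A (k + 2) := by
  induction hz using AddSubgroup.closure_induction with
  | mem x hx =>
    obtain ⟨c, rfl⟩ := hx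
    exact AddSubgroup.subset_closure ⟨Fin.snoc c d, (lnc_snoc c d).symm⟩
  | zero =>
    have : brk (0 : A) d = 0 := by simp [brk]
    rw [this]; exact zero_mem _
  | add x y _ _ hx hy =>
    have : brk (x + y) d = brk x d + brk y d := by simp only [brk]; noncomm_ring
    rw [this]; exact add_mem hx hy
  | neg x _ hx =>
    have : brk (-x) d = -(brk x d) := by simp only [brk]; noncomm_ring
    rw [this]; exact neg_mem hx

lemma key {A : Type*} [Ring A] :
    ∀ n, 1 ≤ n → ∀ m, 1 ≤ m → ∀ (a : Fin m → A) (b : Fin n → A),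
      brk (lnc a) (lnc b) ∈ S A (m + n) := by
  intro n
  induction n with
  | zero => omega
  | succ n ih =>
    intro _ m hm a b
    obtain ⟨m', rfl⟩ : ∃ m', m = m' + 1 := ⟨m - 1, by omega⟩
    rcases Nat.eq_zero_or_pos n with hn0 | hn1
    · subst hn0
      have hb : lnc b = b 0 := rfl
      rw [hb]
      have : brk (lnc a) (b 0) = lnc (Fin.snoc a (b 0)) := (lnc_snoc a (b 0)).symm
      rw [this]
      exact AddSubgroup.subset_closure ⟨Fin.snoc a (b 0), rfl⟩
    · obtain ⟨n', rfl⟩ : ∃ n', n = n' + 1 := ⟨n - 1, by omega⟩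
      have hb : lnc b = brk (lnc (Fin.init b)) (b (Fin.last (n' + 1))) := rfl
      rw [hb, brk_jacobi]
      refine sub_mem ?_ ?_
      · have h1 : brk (lnc a) (lnc (Fin.init b)) ∈ S A (m' + 1 + (n' + 1)) :=
          ih (by omega) (m' + 1) (by omega) a (Fin.init b)
        have h2 := brk_mem_S (k := m' + 1 + n') h1 (b (Fin.last (n' + 1)))
        rwa [show m' + 1 + n' + 2 = m' + 1 + (n' + 1 + 1) by omega] at h2
      · have h0 : brk (lnc a) (b (Fin.last (n' + 1))) =
            lnc (Fin.snoc a (b (Fin.last (n' + 1)))) :=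
          (lnc_snoc a _).symm
        rw [h0]
        have h1 : lnc (Fin.snoc a (b (Fin.last (n' + 1)))) = lnc (Fin.snoc a (b (Fin.last (n' + 1)))) := rfl
        have h2 := ih (by omega) (m' + 2) (by omega) (Fin.snoc a (b (Fin.last (n' + 1)))) (Fin.init b)
        rwa [show m' + 2 + (n' + 1) = m' + 1 + (n' + 1 + 1) by omega] at h2

lemma S_le_T {A : Type*} [Ring A] {k : ℕ} {x : A} (hx : x ∈ S A k) : x ∈ T A k := by
  induction hx using AddSubgroup.closure_induction with
  | mem x hx => exact TwoSidedIdeal.subset_span hx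
  | zero => exact zero_mem _
  | add x y _ _ hx hy => exact add_mem hx hy
  | neg x _ hx => exact neg_mem hx

theorem comm_comm_mem {A : Type*} [Ring A] (m n : ℕ) (hm : 2 ≤ m) (hn : 2 ≤ n)
    (a : Fin m → A) (b : Fin n → A) :
    brk (lnc a) (lnc b) ∈ T A (m + n) :=
  S_le_T (key n (by omega) m (by omega) a b)
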